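/- Let S be a finite semigroup, A = Q S its semigroup algebra, and suppose the Jacobson radical of Q S equals Q·j₀ for some j₀ ∈ Q S with j₀² = 0. Then for each s ∈ S there exist λ_s, ρ_s ∈ {−1, 0, 1} such that s·j₀ = λ_s·j₀ and j₀·s = ρ_s·j₀. -/

import Mathlib

/-- A multiplicative `ℚ`-valued function on a finite semigroup takes values in `{-1,0,1}`. -/
lemma aux_mul_fun_vals {S : Type*} [Semigroup S] [Finite S] (f : S → ℚ)
    (hf : ∀ s t, f (s * t) = f s * f t) (s : S) : f s = -1 ∨ f s = 0 ∨ f s = 1 := by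
  set q := f s with hq
  -- the sequence of powers of `s`
  let p : ℕ → S := fun n => n.rec s (fun _ x => x * s)
  have hp : ∀ n, f (p n) = q ^ (n + 1) := by
    intro n
    induction n with
    | zero => simp [p, q]
    | succ n ih =>
      have : p (n + 1) = p n * s := rfl
      rw [this, hf, ih, ← pow_succ]
  have key : ∀ m n : ℕ, m < n → f (p m) = f (p n) → q = -1 ∨ q = 0 ∨ q = 1 := by
    intro m n hmn he
    rw [hp, hp] at he
    by_cases h0 : q = 0
    · exact Or.inr (Or.inl h0)
    have hne : q ^ (m + 1) ≠ 0 := pow_ne_zero _ h0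
    have hsplit : n + 1 = (m + 1) + (n - m) := by omega
    have he2 : q ^ (m + 1) * 1 = q ^ (m + 1) * q ^ (n - m) := by
      rw [mul_one, ← pow_add, ← hsplit, he]
    have h1 : q ^ (n - m) = 1 := (mul_left_cancel₀ hne he2).symm
    have hk : n - m ≠ 0 := by omega
    have habs : |q| ^ (n - m) = (1 : ℚ) ^ (n - m) := by
      rw [← abs_pow, h1, abs_one, one_pow]
    have h2 : |q| = 1 :=
      (pow_left_strictMonoOn₀ hk).injOn (abs_nonneg q) (by norm_num) habs
    rcases (abs_eq (by norm_num : (0:ℚ) ≤ 1)).mp h2 with h | h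
    · exact Or.inr (Or.inr h)
    · exact Or.inl h
  obtain ⟨m, n, hmn, hpe⟩ := Finite.exists_ne_map_eq_of_infinite p
  rcases hmn.lt_or_gt with h | h
  · exact key m n h (congrArg f hpe)
  · exact key n m h (congrArg f hpe.symm)

/-- Let `S` be a finite semigroup whose rational semigroup algebra `ℚS` has Jacobson
radical `ℚ·j₀` with `j₀² = 0` (encoded: `ℚ·j₀` is a square-zero two-sided ideal).
Then every `s ∈ S` acts on `j₀` on either side by a scalar in `{-1, 0, 1}`. -/
theorem stmt7 {S : Type*} [Semigroup S] [Finite S]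
    (j₀ : MonoidAlgebra ℚ S) (hj : j₀ ≠ 0) (hsq : j₀ * j₀ = 0)
    (hideal : ∀ a : MonoidAlgebra ℚ S,
        a * j₀ ∈ Submodule.span ℚ ({j₀} : Set (MonoidAlgebra ℚ S)) ∧
        j₀ * a ∈ Submodule.span ℚ ({j₀} : Set (MonoidAlgebra ℚ S))) :
    ∀ s : S, ∃ lam rho : ℚ,
      (lam = -1 ∨ lam = 0 ∨ lam = 1) ∧ (rho = -1 ∨ rho = 0 ∨ rho = 1) ∧
      MonoidAlgebra.single s (1 : ℚ) * j₀ = lam • j₀ ∧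
      j₀ * MonoidAlgebra.single s (1 : ℚ) = rho • j₀ := by
  -- choose the scalars
  have hL : ∀ s : S, ∃ c : ℚ, MonoidAlgebra.single s (1 : ℚ) * j₀ = c • j₀ := by
    intro s
    obtain ⟨c, hc⟩ := Submodule.mem_span_singleton.mp (hideal (MonoidAlgebra.single s 1)).1
    exact ⟨c, hc.symm⟩
  have hR : ∀ s : S, ∃ c : ℚ, j₀ * MonoidAlgebra.single s (1 : ℚ) = c • j₀ := by
    intro s
    obtain ⟨c, hc⟩ := Submodule.mem_span_singleton.mp (hideal (MonoidAlgebra.single s 1)).2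
    exact ⟨c, hc.symm⟩
  choose lamf hlamf using hL
  choose rhof hrhof using hR
  -- scalars acting on `j₀` are unique
  have hcancel : ∀ a b : ℚ, a • j₀ = b • j₀ → a = b := by
    intro a b hab
    have : (a - b) • j₀ = 0 := by rw [sub_smul, hab, sub_self]
    rcases smul_eq_zero.mp this with h | h
    · linarith [sub_eq_zero.mp (by exact_mod_cast h)]
    · exact absurd h hj
  -- multiplicativity of the scalar functions
  have hlm : ∀ s t : S, lamf (s * t) = lamf s * lamf t := by
    intro s t
    apply hcancel
    rw [← hlamf]
    have h1 : MonoidAlgebra.single (s * t) (1 : ℚ)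
        = MonoidAlgebra.single s (1 : ℚ) * MonoidAlgebra.single t (1 : ℚ) := by
      rw [MonoidAlgebra.single_mul_single, one_mul]
    rw [h1, mul_assoc, hlamf t, mul_smul_comm, hlamf s, smul_smul, mul_comm]
  have hrm : ∀ s t : S, rhof (s * t) = rhof s * rhof t := by
    intro s t
    apply hcancel
    rw [← hrhof]
    have h1 : MonoidAlgebra.single (s * t) (1 : ℚ)
        = MonoidAlgebra.single s (1 : ℚ) * MonoidAlgebra.single t (1 : ℚ) := by
      rw [MonoidAlgebra.single_mul_single, one_mul]
    rw [h1, ← mul_assoc, hrhof s, smul_mul_assoc, hrhof t, smul_smul]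
  intro s
  exact ⟨lamf s, rhof s, aux_mul_fun_vals lamf hlm s, aux_mul_fun_vals rhof hrm s,
    hlamf s, hrhof s⟩
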